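/- Let 𝔥 : ℝ² → ℝ be continuous, positively 1-homogeneous, with 𝔥(ν) > 0 for ν ≠ 0, continuously differentiable on ℝ² \ {0}, and strictly convex in the sense that 𝔥(tν + (1−t)μ) < t·𝔥(ν) + (1−t)·𝔥(μ) for every t ∈ (0,1) and all vectors ν, μ which are not positively parallel. Let A, B, C, O be four distinct points of ℝ² such that A, B, C are not collinear, and let L : ℝ² → ℝ be defined by L(P) = 𝔥(A−P) + 𝔥(B−P) + 𝔥(C−P). Then O is the unique minimizer of L (that is, L(O) < L(P) for every P ≠ O) if and only if ∇𝔥(A−O) + ∇𝔥(B−O) + ∇𝔥(C−O) = 0. -/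

import Mathlib

open InnerProductSpace Set
open scoped RealInnerProductSpace

private lemma seg_ineq (𝔥 : EuclideanSpace ℝ (Fin 2) → ℝ)
    (h_homog : ∀ c : ℝ, 0 ≤ c → ∀ v, 𝔥 (c • v) = c * 𝔥 v)
    (h_strict : ∀ t ∈ Set.Ioo (0:ℝ) 1, ∀ ν μ : EuclideanSpace ℝ (Fin 2),
      ¬ ((∃ l : ℝ, 0 ≤ l ∧ ν = l • μ) ∨ (∃ l : ℝ, 0 ≤ l ∧ μ = l • ν)) →
      𝔥 (t • ν + (1 - t) • μ) < t * 𝔥 ν + (1 - t) * 𝔥 μ)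
    (x y : EuclideanSpace ℝ (Fin 2)) (t : ℝ) (ht0 : 0 ≤ t) (ht1 : t ≤ 1) :
    𝔥 (t • x + (1 - t) • y) ≤ t * 𝔥 x + (1 - t) * 𝔥 y := by
  rcases eq_or_lt_of_le ht0 with h0 | h0
  · simp [← h0]
  rcases eq_or_lt_of_le ht1 with h1 | h1
  · simp [h1]
  by_cases hpar : ((∃ l : ℝ, 0 ≤ l ∧ x = l • y) ∨ (∃ l : ℝ, 0 ≤ l ∧ y = l • x))
  · rcases hpar with ⟨l, hl, rfl⟩ | ⟨l, hl, rfl⟩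
    · have e : t • (l • y) + (1 - t) • y = (t * l + (1 - t)) • y := by
        rw [smul_smul, add_smul]
      rw [e, h_homog _ (by nlinarith) y, h_homog _ hl y]
      exact le_of_eq (by ring)
    · have e : t • x + (1 - t) • (l • x) = (t + (1 - t) * l) • x := by
        rw [smul_smul, add_smul]
      rw [e, h_homog _ (by nlinarith) x, h_homog _ hl x]
      exact le_of_eq (by ring)
  · exact (h_strict t ⟨h0, h1⟩ x y hpar).le

private lemma first_order (𝔥 : EuclideanSpace ℝ (Fin 2) → ℝ)
    (h_homog : ∀ c : ℝ, 0 ≤ c → ∀ v, 𝔥 (c • v) = c * 𝔥 v)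
    (h_C1 : ContDiffOn ℝ 1 𝔥 {(0 : EuclideanSpace ℝ (Fin 2))}ᶜ)
    (h_strict : ∀ t ∈ Set.Ioo (0:ℝ) 1, ∀ ν μ : EuclideanSpace ℝ (Fin 2),
      ¬ ((∃ l : ℝ, 0 ≤ l ∧ ν = l • μ) ∨ (∃ l : ℝ, 0 ≤ l ∧ μ = l • ν)) →
      𝔥 (t • ν + (1 - t) • μ) < t * 𝔥 ν + (1 - t) * 𝔥 μ)
    (x y : EuclideanSpace ℝ (Fin 2)) (hx : x ≠ 0) :
    𝔥 x + ⟪gradient 𝔥 x, y - x⟫_ℝ ≤ 𝔥 y := by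
  have hdiff : DifferentiableAt ℝ 𝔥 x :=
    (h_C1.contDiffAt (isOpen_compl_singleton.mem_nhds hx)).differentiableAt one_ne_zero
  have hgrad : HasGradientAt 𝔥 (gradient 𝔥 x) x := hdiff.hasGradientAt
  have hline : HasDerivAt (fun t : ℝ => x + t • (y - x)) (y - x) 0 := by
    simpa using ((hasDerivAt_id (0:ℝ)).smul_const (y - x)).const_add x
  have h0 : x + (0:ℝ) • (y - x) = x := by simp
  have hφ : HasDerivAt (fun t : ℝ => 𝔥 (x + t • (y - x))) ⟪gradient 𝔥 x, y - x⟫_ℝ 0 := by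
    have := (h0 ▸ hgrad.hasFDerivAt).comp_hasDerivAt 0 hline
    rw [h0, InnerProductSpace.toDual_apply_apply] at this
    exact this
  have htend : Filter.Tendsto (slope (fun t : ℝ => 𝔥 (x + t • (y - x))) 0)
      (nhdsWithin 0 (Set.Ioi 0)) (nhds ⟪gradient 𝔥 x, y - x⟫_ℝ) :=
    (hasDerivAt_iff_tendsto_slope.mp hφ).mono_left
      (nhdsWithin_mono 0 (fun t ht => ne_of_gt ht))
  have hle : ⟪gradient 𝔥 x, y - x⟫_ℝ ≤ 𝔥 y - 𝔥 x := by
    refine le_of_tendsto htend ?_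
    filter_upwards [Ioo_mem_nhdsGT zero_lt_one] with t ht
    have hseg := seg_ineq 𝔥 h_homog h_strict y x t ht.1.le ht.2.le
    have harg : x + t • (y - x) = t • y + (1 - t) • x := by module
    rw [slope_def_field, harg, h0]
    rw [div_le_iff₀ (by simpa using ht.1)]
    nlinarith [hseg]
  linarith

private lemma first_order_strict (𝔥 : EuclideanSpace ℝ (Fin 2) → ℝ)
    (h_homog : ∀ c : ℝ, 0 ≤ c → ∀ v, 𝔥 (c • v) = c * 𝔥 v)
    (h_C1 : ContDiffOn ℝ 1 𝔥 {(0 : EuclideanSpace ℝ (Fin 2))}ᶜ)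
    (h_strict : ∀ t ∈ Set.Ioo (0:ℝ) 1, ∀ ν μ : EuclideanSpace ℝ (Fin 2),
      ¬ ((∃ l : ℝ, 0 ≤ l ∧ ν = l • μ) ∨ (∃ l : ℝ, 0 ≤ l ∧ μ = l • ν)) →
      𝔥 (t • ν + (1 - t) • μ) < t * 𝔥 ν + (1 - t) * 𝔥 μ)
    (x y : EuclideanSpace ℝ (Fin 2)) (hx : x ≠ 0)
    (hpar : ¬ ((∃ l : ℝ, 0 ≤ l ∧ x = l • y) ∨ (∃ l : ℝ, 0 ≤ l ∧ y = l • x))) :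
    𝔥 x + ⟪gradient 𝔥 x, y - x⟫_ℝ < 𝔥 y := by
  have hm := h_strict (1/2) (by norm_num) x y hpar
  norm_num at hm
  have h1 := first_order 𝔥 h_homog h_C1 h_strict x ((1/2 : ℝ) • x + (1/2 : ℝ) • y) hx
  have he : ((1/2 : ℝ) • x + (1/2 : ℝ) • y) - x = (1/2 : ℝ) • (y - x) := by module
  rw [he, real_inner_smul_right] at h1
  linarith

theorem statement_4 (𝔥 : EuclideanSpace ℝ (Fin 2) → ℝ)
    (h_cont : Continuous 𝔥)
    (h_homog : ∀ c : ℝ, 0 ≤ c → ∀ v, 𝔥 (c • v) = c * 𝔥 v)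
    (h_pos : ∀ v : EuclideanSpace ℝ (Fin 2), v ≠ 0 → 0 < 𝔥 v)
    (h_C1 : ContDiffOn ℝ 1 𝔥 {(0 : EuclideanSpace ℝ (Fin 2))}ᶜ)
    (h_strict : ∀ t ∈ Set.Ioo (0:ℝ) 1, ∀ ν μ : EuclideanSpace ℝ (Fin 2),
      ¬ ((∃ l : ℝ, 0 ≤ l ∧ ν = l • μ) ∨ (∃ l : ℝ, 0 ≤ l ∧ μ = l • ν)) →
      𝔥 (t • ν + (1 - t) • μ) < t * 𝔥 ν + (1 - t) * 𝔥 μ)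
    (A B C O : EuclideanSpace ℝ (Fin 2))
    (h_dist : A ≠ B ∧ A ≠ C ∧ A ≠ O ∧ B ≠ C ∧ B ≠ O ∧ C ≠ O)
    (h_noncol : ¬ Collinear ℝ ({A, B, C} : Set (EuclideanSpace ℝ (Fin 2)))) :
    (∀ P : EuclideanSpace ℝ (Fin 2), P ≠ O →
        𝔥 (A - O) + 𝔥 (B - O) + 𝔥 (C - O) < 𝔥 (A - P) + 𝔥 (B - P) + 𝔥 (C - P)) ↔
      gradient 𝔥 (A - O) + gradient 𝔥 (B - O) + gradient 𝔥 (C - O) = 0 := by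
  obtain ⟨hAB, hAC, hAO, hBC, hBO, hCO⟩ := h_dist
  have hAO' : A - O ≠ 0 := sub_ne_zero.mpr hAO
  have hBO' : B - O ≠ 0 := sub_ne_zero.mpr hBO
  have hCO' : C - O ≠ 0 := sub_ne_zero.mpr hCO
  have hdiff : ∀ x : EuclideanSpace ℝ (Fin 2), x ≠ 0 → DifferentiableAt ℝ 𝔥 x :=
    fun x hx => (h_C1.contDiffAt (isOpen_compl_singleton.mem_nhds hx)).differentiableAt one_ne_zero
  constructor
  · intro hmin
    have hsub : HasFDerivAt (fun P : EuclideanSpace ℝ (Fin 2) => P)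
        (ContinuousLinearMap.id ℝ _) O := hasFDerivAt_id O
    have hF : ∀ Y : EuclideanSpace ℝ (Fin 2), Y - O ≠ 0 →
        HasFDerivAt (fun P => 𝔥 (Y - P))
          ((InnerProductSpace.toDual ℝ _ (gradient 𝔥 (Y - O))).comp
            (0 - ContinuousLinearMap.id ℝ _)) O := by
      intro Y hY
      exact ((hdiff _ hY).hasGradientAt.hasFDerivAt.comp O
        ((hasFDerivAt_const Y O).sub (hasFDerivAt_id O)))
    have hFsum := ((hF A hAO').add (hF B hBO')).add (hF C hCO')
    have hlocal : IsLocalMin (fun P => 𝔥 (A - P) + 𝔥 (B - P) + 𝔥 (C - P)) O := by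
      apply Filter.Eventually.of_forall
      intro P
      rcases eq_or_ne P O with rfl | h
      · exact le_refl _
      · exact (hmin P h).le
    have hzero := hlocal.hasFDerivAt_eq_zero hFsum
    set s := gradient 𝔥 (A - O) + gradient 𝔥 (B - O) + gradient 𝔥 (C - O) with hs
    have h2 := ContinuousLinearMap.ext_iff.mp hzero s
    simp only [ContinuousLinearMap.add_apply, ContinuousLinearMap.comp_apply,
      ContinuousLinearMap.sub_apply, ContinuousLinearMap.zero_apply,
      ContinuousLinearMap.id_apply, zero_sub, InnerProductSpace.toDual_apply_apply,
      ContinuousLinearMap.neg_apply, inner_neg_right,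
      ContinuousLinearMap.zero_apply] at h2
    have hss : ⟪s, s⟫_ℝ = 0 := by
      rw [hs, inner_add_left, inner_add_left]
      linarith
    exact inner_self_eq_zero.mp hss
  · intro hgrad P hP
    have hex : ∃ X ∈ ({A, B, C} : Set (EuclideanSpace ℝ (Fin 2))),
        ¬ ((∃ l : ℝ, 0 ≤ l ∧ (X - O) = l • (X - P)) ∨
           (∃ l : ℝ, 0 ≤ l ∧ (X - P) = l • (X - O))) := by
      by_contra hall
      push_neg at hall
      apply h_noncol
      rw [collinear_iff_exists_forall_eq_smul_vadd]
      refine ⟨O, P - O, fun X hX => ?_⟩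
      rcases hall X hX with ⟨l, hl, heq⟩ | ⟨l, hl, heq⟩
      · have hl1 : l ≠ 1 := by
          intro h; subst h
          simp only [one_smul] at heq
          exact hP (sub_right_injective heq).symm
        have h1 : (1 - l) • (X - O) = (-l) • (P - O) := by
          linear_combination (norm := module) heq
        refine ⟨(1 - l)⁻¹ * (-l), ?_⟩
        have h2 : X - O = ((1 - l)⁻¹ * (-l)) • (P - O) := by
          rw [mul_smul, ← h1, inv_smul_smul₀ (sub_ne_zero.mpr (Ne.symm hl1))]
        rw [vadd_eq_add, ← h2, sub_add_cancel]
      · have hl1 : l ≠ 1 := by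
          intro h; subst h
          simp only [one_smul] at heq
          exact hP (sub_right_injective heq)
        have h1 : (1 - l) • (X - O) = P - O := by
          linear_combination (norm := module) heq
        refine ⟨(1 - l)⁻¹, ?_⟩
        have h2 : X - O = (1 - l)⁻¹ • (P - O) := by
          rw [← h1, inv_smul_smul₀ (sub_ne_zero.mpr (Ne.symm hl1))]
        rw [vadd_eq_add, ← h2, sub_add_cancel]
    obtain ⟨X, hX, hXpar⟩ := hex
    have key : ⟪gradient 𝔥 (A - O), O - P⟫_ℝ + ⟪gradient 𝔥 (B - O), O - P⟫_ℝ
        + ⟪gradient 𝔥 (C - O), O - P⟫_ℝ = 0 := by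
      rw [← inner_add_left, ← inner_add_left, hgrad, inner_zero_left]
    have fo : ∀ Y : EuclideanSpace ℝ (Fin 2), Y - O ≠ 0 →
        𝔥 (Y - O) + ⟪gradient 𝔥 (Y - O), O - P⟫_ℝ ≤ 𝔥 (Y - P) := by
      intro Y hY
      have h := first_order 𝔥 h_homog h_C1 h_strict (Y - O) (Y - P) hY
      have he : (Y - P) - (Y - O) = O - P := by abel
      rwa [he] at h
    have fos : ∀ Y : EuclideanSpace ℝ (Fin 2), Y - O ≠ 0 →
        ¬ ((∃ l : ℝ, 0 ≤ l ∧ (Y - O) = l • (Y - P)) ∨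
           (∃ l : ℝ, 0 ≤ l ∧ (Y - P) = l • (Y - O))) →
        𝔥 (Y - O) + ⟪gradient 𝔥 (Y - O), O - P⟫_ℝ < 𝔥 (Y - P) := by
      intro Y hY hp
      have h := first_order_strict 𝔥 h_homog h_C1 h_strict (Y - O) (Y - P) hY hp
      have he : (Y - P) - (Y - O) = O - P := by abel
      rwa [he] at h
    simp only [Set.mem_insert_iff, Set.mem_singleton_iff] at hX
    rcases hX with rfl | rfl | rfl
    · have h1 := fos X hAO' hXpar
      have h2 := fo B hBO'
      have h3 := fo C hCO'
      linarith
    · have h1 := fo A hAO'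
      have h2 := fos X hBO' hXpar
      have h3 := fo C hCO'
      linarith
    · have h1 := fo A hAO'
      have h2 := fo B hBO'
      have h3 := fos X hCO' hXpar
      linarith
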